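/- Let d ≥ 1, let λ ∈ (0, 1), and let X ⊆ ℝ^d be a finite set of n points partitioned as X = X₁ ∪ X₂ with X₁ ∩ X₂ = ∅ and X₁ nonempty. If |X₁| ≥ (1 − λ)·n, then ‖Cen(X) − Cen(X₁)‖₂² ≤ (λ / ((1 − λ)·n)) · Cost₂(X, Cen(X)). -/

import Mathlib

set_option maxHeartbeats 1000000

open Finset
open scoped Classical

noncomputable def Cost2 {d : ℕ} (P : Finset (EuclideanSpace ℝ (Fin d)))
    (c : EuclideanSpace ℝ (Fin d)) : ℝ :=
  ∑ p ∈ P, ‖p - c‖ ^ 2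

noncomputable def Cen {d : ℕ} (P : Finset (EuclideanSpace ℝ (Fin d))) :
    EuclideanSpace ℝ (Fin d) :=
  ((P.card : ℝ)⁻¹) • ∑ p ∈ P, p

lemma sumCS {d : ℕ} (S : Finset (EuclideanSpace ℝ (Fin d)))
    (v : EuclideanSpace ℝ (Fin d) → EuclideanSpace ℝ (Fin d)) :
    ‖∑ p ∈ S, v p‖ ^ 2 ≤ (S.card : ℝ) * ∑ p ∈ S, ‖v p‖ ^ 2 := by
  calc ‖∑ p ∈ S, v p‖ ^ 2 ≤ (∑ p ∈ S, ‖v p‖) ^ 2 :=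
        pow_le_pow_left₀ (norm_nonneg _) (norm_sum_le _ _) 2
    _ ≤ (S.card : ℝ) * ∑ p ∈ S, ‖v p‖ ^ 2 := by
        have := sq_sum_le_card_mul_sum_sq (s := S) (f := fun p => ‖v p‖)
        exact_mod_cast this

lemma cen_sum {d : ℕ} (P : Finset (EuclideanSpace ℝ (Fin d))) (hP : P.Nonempty) :
    ∑ p ∈ P, p = (P.card : ℝ) • Cen P := by
  have h : (P.card : ℝ) ≠ 0 := by
    simpa using Nat.pos_of_ne_zero (Finset.card_ne_zero.mpr hP) |>.ne'
  rw [Cen, smul_smul, mul_inv_cancel₀ h, one_smul]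

theorem stmt13 (d : ℕ) (hd : 1 ≤ d) (lam : ℝ) (hlam0 : 0 < lam) (hlam1 : lam < 1)
    (X X₁ X₂ : Finset (EuclideanSpace ℝ (Fin d))) (n : ℕ) (hn : n = X.card)
    (hpart : X = X₁ ∪ X₂) (hdisj : Disjoint X₁ X₂) (hX₁ : X₁.Nonempty)
    (hcard : (1 - lam) * (n : ℝ) ≤ (X₁.card : ℝ)) :
    ‖Cen X - Cen X₁‖ ^ 2 ≤ (lam / ((1 - lam) * (n : ℝ))) * Cost2 X (Cen X) := by
  set c := Cen X with hc
  set c₁ := Cen X₁ with hc₁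
  have hXne : X.Nonempty := ⟨hX₁.choose, by rw [hpart]; exact mem_union_left _ hX₁.choose_spec⟩
  have hm1pos : (0 : ℝ) < (X₁.card : ℝ) := by exact_mod_cast Finset.card_pos.mpr hX₁
  have hnpos : (0 : ℝ) < (n : ℝ) := by
    rw [hn]; exact_mod_cast Finset.card_pos.mpr hXne
  -- sums of deviations
  have hs1 : ∑ p ∈ X₁, (p - c) = (X₁.card : ℝ) • (c₁ - c) := by
    rw [Finset.sum_sub_distrib, Finset.sum_const, cen_sum X₁ hX₁, smul_sub]
    simp [← Nat.cast_smul_eq_nsmul ℝ, ← hc₁]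
  have hsX : ∑ p ∈ X, (p - c) = 0 := by
    rw [Finset.sum_sub_distrib, Finset.sum_const, cen_sum X hXne]
    simp [← Nat.cast_smul_eq_nsmul ℝ, ← hc]
  have hs2 : ∑ p ∈ X₂, (p - c) = -((X₁.card : ℝ) • (c₁ - c)) := by
    have h := Finset.sum_union (f := fun p => p - c) hdisj
    rw [← hpart, hsX, hs1] at h
    exact eq_neg_of_add_eq_zero_right h.symm
  -- Cauchy–Schwarz on both pieces
  have key1 := sumCS X₁ (fun p => p - c)
  have key2 := sumCS X₂ (fun p => p - c)
  rw [hs1] at key1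
  rw [hs2, norm_neg] at key2
  have hq : ‖(X₁.card : ℝ) • (c₁ - c)‖ ^ 2 = (X₁.card : ℝ)^2 * ‖c - c₁‖^2 := by
    rw [norm_smul, norm_sub_rev]
    simp [mul_pow, abs_of_pos hm1pos]
  rw [hq] at key1 key2
  -- cost splits
  have hcost : Cost2 X c = (∑ p ∈ X₁, ‖p - c‖^2) + (∑ p ∈ X₂, ‖p - c‖^2) := by
    rw [Cost2, hpart, Finset.sum_union hdisj]
  have hnsum : (n : ℝ) = (X₁.card : ℝ) + (X₂.card : ℝ) := by
    rw [hn, hpart, Finset.card_union_of_disjoint hdisj]; push_cast; ring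
  set S₁ := ∑ p ∈ X₁, ‖p - c‖^2
  set S₂ := ∑ p ∈ X₂, ‖p - c‖^2
  have hS1 : 0 ≤ S₁ := Finset.sum_nonneg fun _ _ => by positivity
  have hS2 : 0 ≤ S₂ := Finset.sum_nonneg fun _ _ => by positivity
  have hq0 : 0 ≤ ‖c - c₁‖^2 := by positivity
  have hD : 0 < (1 - lam) * (n : ℝ) := by nlinarith
  have hm2nn : (0:ℝ) ≤ (X₂.card : ℝ) := Nat.cast_nonneg _
  have hlam1' : (0:ℝ) ≤ 1 - lam := by linarith
  have hA : (X₁.card : ℝ) * ‖c - c₁‖^2 ≤ S₁ := by nlinarith [key1, hm1pos]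
  have hB : (1 - lam) * (X₂.card : ℝ) ≤ lam * (X₁.card : ℝ) := by nlinarith [hcard, hnsum]
  have h3 := mul_le_mul_of_nonneg_left key2 hlam1'
  have h4 := mul_le_mul_of_nonneg_right hB hS2
  have h5 := mul_le_mul_of_nonneg_left hA (mul_nonneg hlam1' hm2nn)
  have h6 := mul_le_mul_of_nonneg_right hB hS1
  rw [hcost, div_mul_eq_mul_div, le_div_iff₀ hD, hnsum]
  have hfin : (X₁.card : ℝ) * (‖c - c₁‖^2 * ((1 - lam) * ((X₁.card : ℝ) + (X₂.card : ℝ))))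
      ≤ (X₁.card : ℝ) * (lam * (S₁ + S₂)) := by nlinarith [h3, h4, h5, h6]
  exact le_of_mul_le_mul_left hfin hm1pos
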